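/- Let n ≥ 3 be an integer, let 0 < α < 1/2, and let u be an integer with n/2 + √n + αn < u ≤ n. Then ∑_{i=u}^{n} C(n,i) (1/2 − α)^{n−i} (1/2 + α)^{i} ≤ √n · C(n,u) (1/2 − α)^{n−u} (1/2 + α)^{u}, i.e. Pr[B(n, 1/2 + α) ≥ u] ≤ √n · Pr[B(n, 1/2 + α) = u]. -/

import Mathlib

/-- For `n ≥ 3`, `0 < α < 1/2` and `n/2 + √n + αn < u ≤ n`,
`Pr[B(n,1/2+α) ≥ u] ≤ √n · Pr[B(n,1/2+α) = u]`. -/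
theorem binomial_tail_le_sqrt_mul_point (n : ℕ) (hn : 3 ≤ n) (α : ℝ)
    (h0 : 0 < α) (h1 : α < 1/2) (u : ℕ)
    (hu1 : (n:ℝ)/2 + Real.sqrt n + α * n < u) (hu2 : u ≤ n) :
    ∑ i ∈ Finset.Icc u n, (n.choose i : ℝ) * (1/2 - α)^(n - i) * (1/2 + α)^i ≤
      Real.sqrt n * ((n.choose u : ℝ) * (1/2 - α)^(n - u) * (1/2 + α)^u) := by
  set s := Real.sqrt n with hsdef
  have hs2 : s^2 = n := Real.sq_sqrt (by positivity)
  have hn3 : (3:ℝ) ≤ n := by exact_mod_cast hn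
  have hs1 : 1 ≤ s := by nlinarith [Real.sqrt_nonneg (n:ℝ)]
  have hs0 : 0 < s := by linarith
  have hq0 : (0:ℝ) < 1/2 - α := by linarith
  have hp0 : (0:ℝ) < 1/2 + α := by linarith
  have hr0 : (0:ℝ) ≤ 1 - 1/s := by
    have : 1/s ≤ 1 := by rw [div_le_one hs0]; exact hs1
    linarith
  -- step inequality
  have key : ∀ i, u ≤ i → i < n →
      (n.choose (i+1) : ℝ) * (1/2 - α)^(n - (i+1)) * (1/2 + α)^(i+1) ≤
        (1 - 1/s) * ((n.choose i : ℝ) * (1/2 - α)^(n - i) * (1/2 + α)^i) := by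
    intro i hiu hin
    have hx : (u:ℝ) ≤ i := by exact_mod_cast hiu
    have hnum : ((n:ℝ) - i) * (1/2+α) * s ≤ (s-1) * ((i:ℝ)+1) * (1/2-α) := by
      nlinarith [mul_pos hs0 hq0, mul_pos hs0 hp0, sq_nonneg (s - 1),
        mul_nonneg (sub_nonneg.2 hs1) (le_of_lt hq0)]
    have hchoose : ((n.choose (i+1)) : ℝ) * ((i:ℝ)+1) = (n.choose i : ℝ) * ((n:ℝ) - i) := by
      have := Nat.choose_succ_right_eq n i
      have hc : ((n - i : ℕ) : ℝ) = (n:ℝ) - i := by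
        rw [Nat.cast_sub hin.le]
      calc ((n.choose (i+1)) : ℝ) * ((i:ℝ)+1) = ((n.choose (i+1) * (i+1) : ℕ) : ℝ) := by push_cast; ring
        _ = ((n.choose i * (n - i) : ℕ) : ℝ) := by rw [this]
        _ = (n.choose i : ℝ) * ((n:ℝ) - i) := by push_cast [hin.le]; ring
    have hqpow : (1/2 - α)^(n-i) = (1/2 - α)^(n-(i+1)) * (1/2 - α) := by
      rw [← pow_succ]; congr 1; omega
    have hb : (0:ℝ) ≤ (n.choose i : ℝ) * (1/2 - α)^(n-i) * (1/2+α)^i := by positivity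
    have hpos : (0:ℝ) < ((i:ℝ)+1) * ((1/2-α) * s) := by positivity
    rw [← mul_le_mul_iff_of_pos_right hpos]
    calc (n.choose (i+1) : ℝ) * (1/2 - α)^(n - (i+1)) * (1/2 + α)^(i+1) * (((i:ℝ)+1) * ((1/2-α)*s))
        = (((n:ℝ)-i) * (1/2+α) * s) * ((n.choose i : ℝ) * (1/2-α)^(n-i) * (1/2+α)^i) := by
          rw [hqpow, pow_succ]
          linear_combination ((1/2 - α)^(n-(i+1)) * (1/2 - α) * ((1/2+α)^i * (1/2+α)) * s) * hchoose
      _ ≤ ((s-1) * ((i:ℝ)+1) * (1/2-α)) * ((n.choose i : ℝ) * (1/2-α)^(n-i) * (1/2+α)^i) :=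
          mul_le_mul_of_nonneg_right hnum hb
      _ = (1 - 1/s) * ((n.choose i : ℝ) * (1/2-α)^(n-i) * (1/2+α)^i) * (((i:ℝ)+1) * ((1/2-α)*s)) := by
          field_simp
  -- iterate
  have geom : ∀ k, u + k ≤ n →
      (n.choose (u+k) : ℝ) * (1/2 - α)^(n - (u+k)) * (1/2 + α)^(u+k) ≤
        (1 - 1/s)^k * ((n.choose u : ℝ) * (1/2 - α)^(n - u) * (1/2 + α)^u) := by
    intro k
    induction k with
    | zero => intro _; simp
    | succ k ih =>
      intro h
      have h' : u + k ≤ n := by omega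
      calc (n.choose (u+k+1) : ℝ) * (1/2 - α)^(n - (u+k+1)) * (1/2 + α)^(u+k+1)
          ≤ (1 - 1/s) * ((n.choose (u+k) : ℝ) * (1/2 - α)^(n - (u+k)) * (1/2 + α)^(u+k)) :=
            key (u+k) (by omega) (by omega)
        _ ≤ (1 - 1/s) * ((1 - 1/s)^k * ((n.choose u : ℝ) * (1/2 - α)^(n - u) * (1/2 + α)^u)) :=
            mul_le_mul_of_nonneg_left (ih h') hr0
        _ = (1 - 1/s)^(k+1) * ((n.choose u : ℝ) * (1/2 - α)^(n - u) * (1/2 + α)^u) := by ring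
  have hau0 : (0:ℝ) ≤ (n.choose u : ℝ) * (1/2 - α)^(n-u) * (1/2+α)^u := by positivity
  have geomsum : ∀ m : ℕ, ∑ k ∈ Finset.range m, (1 - 1/s)^k ≤ s := by
    intro m
    induction m with
    | zero => simpa using hs0.le
    | succ m ih =>
      rw [geom_sum_succ]
      have : (1 - 1/s) * ∑ k ∈ Finset.range m, (1 - 1/s)^k ≤ (1 - 1/s) * s :=
        mul_le_mul_of_nonneg_left ih hr0
      have hss : (1 - 1/s) * s = s - 1 := by field_simp
      linarith
  rw [← Finset.Ico_add_one_right_eq_Icc, Finset.sum_Ico_eq_sum_range]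
  calc ∑ k ∈ Finset.range (n + 1 - u), (n.choose (u+k) : ℝ) * (1/2 - α)^(n - (u+k)) * (1/2 + α)^(u+k)
      ≤ ∑ k ∈ Finset.range (n + 1 - u), (1 - 1/s)^k * ((n.choose u : ℝ) * (1/2 - α)^(n - u) * (1/2 + α)^u) := by
        apply Finset.sum_le_sum
        intro k hk
        exact geom k (by simp only [Finset.mem_range] at hk; omega)
    _ = (∑ k ∈ Finset.range (n + 1 - u), (1 - 1/s)^k) * ((n.choose u : ℝ) * (1/2 - α)^(n - u) * (1/2 + α)^u) := by
        rw [← Finset.sum_mul]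
    _ ≤ s * ((n.choose u : ℝ) * (1/2 - α)^(n - u) * (1/2 + α)^u) :=
        mul_le_mul_of_nonneg_right (geomsum _) hau0
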